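/- Let D ∈ B(ℓ²(ℕ)) be given by De_k = e_{2k}, P the orthogonal projection onto (ran D)^⊥ = ker D*, A = I − P, and C = P. Then 0 ∉ σ_{e2}([[A,0],[C,D]]) although 0 ∈ σ_{e2}(A) ∩ σ*_{e2}(D). In other words, the inclusion σ_{e2}(triangular matrix) ⊆ σ_{e2}(A) ∪ σ_{e2}(D) can be strict. -/

import Mathlib

open Filter
open scoped InnerProductSpace ENNReal

noncomputable section

/-- The essential spectrum `σ_{e2}` of a bounded operator: `λ` belongs to it iff there is a
singular (Weyl) sequence of unit vectors converging weakly to `0` with `‖(T − λ)xₙ‖ → 0`. -/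
def sigmaE2B {E : Type*} [NormedAddCommGroup E] [NormedSpace ℂ E] (T : E →L[ℂ] E) : Set ℂ :=
  {l | ∃ x : ℕ → E, (∀ n, ‖x n‖ = 1) ∧
    (∀ φ : E →L[ℂ] ℂ, Tendsto (fun n => φ (x n)) atTop (nhds 0)) ∧
    Tendsto (fun n => ‖T (x n) - l • x n‖) atTop (nhds 0)}

/-- `σ*_{e2}`: the set of `λ` such that `ran(T − λ)` fails to be closed with finite
codimension. -/
def sigmaE2StarB {E : Type*} [NormedAddCommGroup E] [NormedSpace ℂ E] (T : E →L[ℂ] E) : Set ℂ :=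
  {l | ¬ (IsClosed ((LinearMap.range ((T - l • (1 : E →L[ℂ] E) : E →L[ℂ] E) : E →ₗ[ℂ] E) : Submodule ℂ E) : Set E) ∧
    FiniteDimensional ℂ (E ⧸ LinearMap.range ((T - l • (1 : E →L[ℂ] E) : E →L[ℂ] E) : E →ₗ[ℂ] E)))}

/-- The lower triangular operator matrix `[[A, 0], [C, D]]` on `E ⊕ E`. -/
def triMatrix {E : Type*} [NormedAddCommGroup E] [NormedSpace ℂ E] (A C D : E →L[ℂ] E) :
    (E × E) →L[ℂ] (E × E) :=
  (A.comp (ContinuousLinearMap.fst ℂ E E)).prod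
    ((C.comp (ContinuousLinearMap.fst ℂ E E)) + (D.comp (ContinuousLinearMap.snd ℂ E E)))

namespace Stmt11Aux

abbrev E := lp (fun _ : ℕ => ℂ) 2

lemma norm_e (k : ℕ) : ‖(lp.single 2 k (1:ℂ) : E)‖ = 1 := by
  have h : (0:ℝ) < (2:ℝ≥0∞).toReal := by norm_num
  simpa using lp.norm_single h (fun _ : ℕ => (1:ℂ)) k

def coordL (j : ℕ) : E →L[ℂ] ℂ := innerSL ℂ (lp.single 2 j (1:ℂ))

lemma coordL_apply (j : ℕ) (x : E) : coordL j x = x j := by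
  simp [coordL, lp.inner_single_left]

lemma coordL_single (j i : ℕ) :
    coordL j (lp.single 2 i (1:ℂ)) = if j = i then 1 else 0 := by
  rw [coordL_apply, lp.single_apply]
  split_ifs with h
  · subst h; simp
  · simp [Pi.single_apply, h]

lemma clm_zero_of_singles {F : Type*} [NormedAddCommGroup F] [NormedSpace ℂ F]
    (f : E →L[ℂ] F) (h : ∀ k, f (lp.single 2 k (1:ℂ)) = 0) : ∀ x, f x = 0 := by
  intro x
  have hs : HasSum (fun i => lp.single 2 i (x i)) x :=
    lp.hasSum_single (by norm_num) x
  have h2 : HasSum (fun i => f (lp.single 2 i (x i))) (f x) := hs.mapL f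
  have h3 : ∀ i, f (lp.single 2 i (x i)) = 0 := by
    intro i
    have hx : lp.single 2 i (x i) = ((x i) • lp.single 2 i (1:ℂ) : E) := by
      rw [← lp.single_smul]
      norm_num
    rw [hx, map_smul, h, smul_zero]
  have : HasSum (fun _ : ℕ => (0:F)) (f x) := by simpa [h3] using h2
  simpa using this.unique hasSum_zero

variable (D : E →L[ℂ] E)
variable (hD : ∀ k : ℕ, D (lp.single 2 k (1 : ℂ)) = lp.single 2 (2 * k) (1 : ℂ))

include hD

lemma D_coord_odd (x : E) (j : ℕ) : (D x) (2*j+1) = 0 := by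
  have h : ∀ z, ((coordL (2*j+1)).comp D) z = 0 := by
    apply clm_zero_of_singles
    intro k
    simp only [ContinuousLinearMap.comp_apply, hD, coordL_single]
    rw [if_neg (by omega)]
  simpa [coordL_apply] using h x

lemma odd_mem (j : ℕ) : (lp.single 2 (2*j+1) (1:ℂ) : E) ∈ (LinearMap.range (D : E →ₗ[ℂ] E))ᗮ := by
  rw [Submodule.mem_orthogonal]
  rintro v ⟨x, rfl⟩
  rw [lp.inner_single_right]
  simp [RCLike.inner_apply, D_coord_odd D hD]

lemma Dadj_single (k : ℕ) :
    (ContinuousLinearMap.adjoint D) (lp.single 2 (2*k) (1:ℂ)) = lp.single 2 k (1:ℂ) := by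
  apply lp.ext
  funext j
  rw [show ((ContinuousLinearMap.adjoint D) (lp.single 2 (2*k) (1:ℂ))) j
      = coordL j ((ContinuousLinearMap.adjoint D) (lp.single 2 (2*k) (1:ℂ))) from
    (coordL_apply _ _).symm]
  show (innerSL ℂ (lp.single 2 j (1:ℂ)))
      ((ContinuousLinearMap.adjoint D) (lp.single 2 (2*k) (1:ℂ))) = _
  rw [innerSL_apply_apply, ContinuousLinearMap.adjoint_inner_right, hD, lp.inner_single_left]
  by_cases h : j = k
  · subst h
    simp [lp.single_apply_self]
  · rw [lp.single_apply_ne 2 (2*k) _ (by omega), lp.single_apply_ne 2 k _ h]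
    simp

lemma Dstar_D (v : E) : (ContinuousLinearMap.adjoint D) (D v) = v := by
  have h : ∀ z : E, ((ContinuousLinearMap.adjoint D).comp D - 1) z = 0 :=
    clm_zero_of_singles _ (fun k => by
      simp only [ContinuousLinearMap.sub_apply, ContinuousLinearMap.comp_apply,
        ContinuousLinearMap.one_apply, hD, sub_eq_zero]
      exact Dadj_single D hD k)
  have h2 := h v
  simp only [ContinuousLinearMap.sub_apply, ContinuousLinearMap.comp_apply,
    ContinuousLinearMap.one_apply, sub_eq_zero] at h2
  exact h2

lemma norm_D (v : E) : ‖D v‖ = ‖v‖ := by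
  have h1 : (inner ℂ (D v) (D v) : ℂ) = inner ℂ v v := by
    rw [← ContinuousLinearMap.adjoint_inner_left, Dstar_D D hD]
  have h2 : ‖D v‖^2 = ‖v‖^2 := by
    rw [← inner_self_eq_norm_sq (𝕜 := ℂ), ← inner_self_eq_norm_sq (𝕜 := ℂ), h1]
  rw [← Real.sqrt_sq (norm_nonneg (D v)), ← Real.sqrt_sq (norm_nonneg v), h2]

omit hD

lemma coords_tendsto_zero (y : E) : Tendsto (fun i => y i) atTop (nhds 0) := by
  have hsum : Summable fun i => ‖y i‖ ^ (2:ℝ≥0∞).toReal :=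
    (lp.memℓp y).summable (by norm_num)
  have h0 := hsum.tendsto_atTop_zero
  have heq : ∀ i : ℕ, Real.sqrt (‖y i‖ ^ (2:ℝ≥0∞).toReal) = ‖y i‖ := by
    intro i
    rw [show (2:ℝ≥0∞).toReal = ((2:ℕ):ℝ) by norm_num, Real.rpow_natCast]
    exact Real.sqrt_sq (norm_nonneg _)
  have h1 : Tendsto (fun i => ‖y i‖) atTop (nhds 0) := by
    have h2 := h0.sqrt
    simpa [heq] using h2
  exact tendsto_zero_iff_norm_tendsto_zero.2 h1

lemma weak_null (φ : E →L[ℂ] ℂ) :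
    Tendsto (fun n => φ (lp.single 2 (2*n+1) (1:ℂ))) atTop (nhds 0) := by
  set y := (InnerProductSpace.toDual ℂ E).symm φ with hy
  have hφ : ∀ x, φ x = inner ℂ y x := fun x => (InnerProductSpace.toDual_symm_apply).symm
  have h1 : ∀ n, φ (lp.single 2 (2*n+1) (1:ℂ)) = star (y (2*n+1)) := by
    intro n
    rw [hφ, lp.inner_single_right, RCLike.inner_apply, one_mul, starRingEnd_apply]
  have h2 : Tendsto (fun n : ℕ => y (2*n+1)) atTop (nhds 0) :=
    (coords_tendsto_zero y).comp
      (tendsto_atTop_mono (fun n : ℕ => by omega : ∀ n : ℕ, n ≤ 2*n+1) tendsto_id)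
  have h3 := (continuous_star.tendsto (0:ℂ)).comp h2
  simp only [Function.comp_def, star_zero] at h3
  simpa [h1] using h3

lemma norm_le_of_orth {a b : E} (h : (inner ℂ a b : ℂ) = 0) : ‖a‖ ≤ ‖a + b‖ := by
  have h2 : ‖a + b‖^2 = ‖a‖^2 + ‖b‖^2 := by
    rw [norm_add_sq (𝕜 := ℂ), h]
    simp
  nlinarith [norm_nonneg a, norm_nonneg b, norm_nonneg (a + b)]

end Stmt11Aux

open Stmt11Aux

set_option maxHeartbeats 1000000 in
/-- On `ℓ²(ℕ)`, let `D` be the bounded operator with `D e_k = e_{2k}`, `P` the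
orthogonal projection onto `(ran D)^⊥ = ker D*`, `A = I - P` and `C = P`.  Then
`0 ∉ σ_{e2}([[A,0],[C,D]])` although `0 ∈ σ_{e2}(A) ∩ σ*_{e2}(D)`: the inclusion
`σ_{e2}(triangular matrix) ⊆ σ_{e2}(A) ∪ σ_{e2}(D)` can be strict. -/
theorem stmt_11 (D P : lp (fun _ : ℕ => ℂ) 2 →L[ℂ] lp (fun _ : ℕ => ℂ) 2)
    (hD : ∀ k : ℕ, D (lp.single 2 k (1 : ℂ)) = lp.single 2 (2 * k) (1 : ℂ))
    (hPmem : ∀ x, P x ∈ (LinearMap.range (D : lp (fun _ : ℕ => ℂ) 2 →ₗ[ℂ] lp (fun _ : ℕ => ℂ) 2))ᗮ)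
    (hPfix : ∀ x ∈ (LinearMap.range (D : lp (fun _ : ℕ => ℂ) 2 →ₗ[ℂ] lp (fun _ : ℕ => ℂ) 2))ᗮ, P x = x) :
    (0 : ℂ) ∉ sigmaE2B (triMatrix (1 - P) P D) ∧
    (0 : ℂ) ∈ sigmaE2B (1 - P) ∧
    (0 : ℂ) ∈ sigmaE2StarB D := by
  refine ⟨?_, ?_, ?_⟩
  · -- part 3
    intro h
    obtain ⟨x, hnorm, -, hT⟩ := h
    set u := fun n => (x n).1 with hu'
    set v := fun n => (x n).2 with hv'
    have hTx : ∀ n, triMatrix (1 - P) P D (x n) - (0:ℂ) • x n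
        = ((1 - P) (u n), P (u n) + D (v n)) := by
      intro n
      simp [triMatrix, ContinuousLinearMap.prod_apply, hu', hv']
    have hT' : Tendsto (fun n => ‖((1 - P) (u n), P (u n) + D (v n))‖) atTop (nhds 0) := by
      have hfun : (fun n => ‖triMatrix (1 - P) P D (x n) - (0:ℂ) • x n‖)
          = fun n => ‖((1 - P) (u n), P (u n) + D (v n))‖ := funext fun n => by rw [hTx n]
      rwa [hfun] at hT
    have hA : Tendsto (fun n => ‖(1 - P) (u n)‖) atTop (nhds 0) :=
      squeeze_zero (fun n => norm_nonneg _)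
        (fun n => norm_fst_le ((1 - P) (u n), P (u n) + D (v n))) hT'
    have hB : Tendsto (fun n => ‖P (u n) + D (v n)‖) atTop (nhds 0) :=
      squeeze_zero (fun n => norm_nonneg _)
        (fun n => norm_snd_le ((1 - P) (u n), P (u n) + D (v n))) hT'
    have horth : ∀ n, (inner ℂ (P (u n)) (D (v n)) : ℂ) = 0 := by
      intro n
      exact (Submodule.mem_orthogonal' _ _).1 (hPmem (u n)) _ ⟨v n, rfl⟩
    have hPu : Tendsto (fun n => ‖P (u n)‖) atTop (nhds 0) :=
      squeeze_zero (fun _ => norm_nonneg _)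
        (fun n => norm_le_of_orth (horth n)) hB
    have hDv : Tendsto (fun n => ‖D (v n)‖) atTop (nhds 0) := by
      refine squeeze_zero (fun _ => norm_nonneg _) (fun n => ?_) hB
      have h0 : (inner ℂ (D (v n)) (P (u n)) : ℂ) = 0 := by
        rw [← inner_conj_symm, horth n, map_zero]
      simpa [add_comm] using norm_le_of_orth h0
    have hv : Tendsto (fun n => ‖v n‖) atTop (nhds 0) := by
      have : (fun n => ‖D (v n)‖) = fun n => ‖v n‖ := funext fun n => norm_D D hD (v n)
      rwa [this] at hDv
    have hun : Tendsto (fun n => ‖u n‖) atTop (nhds 0) := by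
      refine squeeze_zero (fun _ => norm_nonneg _) (fun n => ?_)
        (by simpa using hA.add hPu)
      calc ‖u n‖ = ‖(1 - P) (u n) + P (u n)‖ := by
            simp [ContinuousLinearMap.sub_apply]
        _ ≤ ‖(1 - P) (u n)‖ + ‖P (u n)‖ := norm_add_le _ _
    have hfinal : Tendsto (fun _ : ℕ => (1:ℝ)) atTop (nhds 0) := by
      refine squeeze_zero (fun _ => zero_le_one) (fun n => ?_) (by simpa using hun.add hv)
      rw [← hnorm n, Prod.norm_def]
      exact max_le (le_add_of_nonneg_right (norm_nonneg _))
        (le_add_of_nonneg_left (norm_nonneg _))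
    exact one_ne_zero (tendsto_nhds_unique tendsto_const_nhds hfinal)
  · -- part 1
    refine ⟨fun n => lp.single 2 (2*n+1) (1:ℂ), fun n => norm_e _, weak_null, ?_⟩
    have hz : (fun n : ℕ => ‖(1 - P) (lp.single 2 (2*n+1) (1:ℂ))
        - (0:ℂ) • lp.single 2 (2*n+1) (1:ℂ)‖) = fun _ => (0:ℝ) := by
      funext n
      rw [zero_smul, sub_zero, ContinuousLinearMap.sub_apply,
        ContinuousLinearMap.one_apply, hPfix _ (odd_mem D hD n), sub_self, norm_zero]
    rw [hz]
    exact tendsto_const_nhds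
  · -- part 2
    have hsub : D - (0:ℂ) • (1 : lp (fun _ : ℕ => ℂ) 2 →L[ℂ] lp (fun _ : ℕ => ℂ) 2) = D := by
      simp
    rw [sigmaE2StarB, Set.mem_setOf_eq, hsub]
    rintro ⟨-, hfd⟩
    have hli : LinearIndependent ℂ (fun j : ℕ =>
        (LinearMap.range (D : lp (fun _ : ℕ => ℂ) 2 →ₗ[ℂ] lp (fun _ : ℕ => ℂ) 2)).mkQ
          (lp.single 2 (2*j+1) (1:ℂ))) := by
      rw [linearIndependent_iff']
      intro s g hsum j hj
      have h0 : (LinearMap.range (D : E →ₗ[ℂ] E)).mkQ (∑ i ∈ s, g i • lp.single 2 (2*i+1) (1:ℂ)) = 0 := by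
        rw [map_sum]
        simpa [map_smul] using hsum
      rw [Submodule.mkQ_apply, Submodule.Quotient.mk_eq_zero] at h0
      obtain ⟨y, hy⟩ := h0
      have hL : coordL (2*j+1) (D y) = 0 := by
        rw [coordL_apply]
        exact D_coord_odd D hD y j
      rw [show D y = _ from hy, map_sum] at hL
      simp only [map_smul, coordL_single, smul_eq_mul] at hL
      have hsimp : ∑ i ∈ s, g i * (if 2*j+1 = 2*i+1 then (1:ℂ) else 0) = g j := by
        rw [Finset.sum_eq_single j]
        · rw [if_pos rfl, mul_one]
        · intro b _ hb
          rw [if_neg (by omega), mul_zero]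
        · intro h
          exact absurd hj h
      rw [hsimp] at hL
      exact hL
    have : Finite ℕ := hli.finite
    exact not_finite ℕ

end
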